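/- Every entanglement-breaking channel Λ : L(H_E) → L(H_B) admits a representation Λ(ρ) = Σ_{i=1}^s ψ_i · tr(η̃_i ρ) where the ψ_i are pure states on H_B, {η̃_i} is a rank-1 POVM on H_E, and s ≤ (dim H_B · dim H_E)². -/

import Mathlib

open Matrix
open scoped Kronecker ComplexOrder

noncomputable section

variable {n : Type*} [Fintype n] [DecidableEq n]

/-- Square root of a positive semidefinite matrix (0 if not PSD). -/
def msqrt (M : Matrix n n ℂ) : Matrix n n ℂ := by
  classical exact if h : M.PosSemidef then
    (h.1.eigenvectorUnitary : Matrix n n ℂ) * diagonal ((↑) ∘ (√·) ∘ h.1.eigenvalues) *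
      (star h.1.eigenvectorUnitary : Matrix n n ℂ) else 0

/-- Trace norm ‖M‖₁ = tr √(M Mᴴ). -/
def traceNorm (M : Matrix n n ℂ) : ℝ := ((msqrt (M * Mᴴ)).trace).re

/-- Trace distance (1/2)‖ρ − σ‖₁. -/
def traceDist (ρ σ : Matrix n n ℂ) : ℝ := traceNorm (ρ - σ) / 2

/-- Uhlmann fidelity F(ρ,σ) = (tr √(√σ ρ √σ))². -/
def fidelity (ρ σ : Matrix n n ℂ) : ℝ :=
  (((msqrt (msqrt σ * ρ * msqrt σ)).trace).re) ^ 2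

/-- Density operator: positive semidefinite with unit trace. -/
def IsDensity (ρ : Matrix n n ℂ) : Prop := ρ.PosSemidef ∧ ρ.trace = 1

/-- Rank-one operator |v⟩⟨v| associated with a vector. -/
def vecState {α : Type*} (v : α → ℂ) : Matrix α α ℂ :=
  Matrix.of fun i j => v i * (starRingEnd ℂ) (v j)

/-- Pure state: |v⟩⟨v| for some unit vector v. -/
def IsPure {α : Type*} [Fintype α] (φ : Matrix α α ℂ) : Prop :=
  ∃ v : α → ℂ, (∑ i, Complex.normSq (v i)) = 1 ∧ φ = vecState v

/-- Set of separable states across the cut α : β. -/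
def SepSet (α β : Type*) [Fintype α] [Fintype β] : Set (Matrix (α × β) (α × β) ℂ) :=
  convexHull ℝ {σ | ∃ φ ψ, IsPure φ ∧ IsPure ψ ∧ σ = φ ⊗ₖ ψ}

variable {α β : Type*} [Fintype α] [Fintype β] [DecidableEq α] [DecidableEq β]

/-- Extension Γ ⊗ id of a linear map on matrices by a k-dimensional ancilla. -/
def lmapExt (Γ : Matrix α α ℂ →ₗ[ℂ] Matrix β β ℂ) (k : ℕ)
    (M : Matrix (α × Fin k) (α × Fin k) ℂ) : Matrix (β × Fin k) (β × Fin k) ℂ :=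
  Matrix.of fun im jn => Γ (Matrix.of fun p q => M (p, im.2) (q, jn.2)) im.1 jn.1

/-- Completely positive trace-preserving linear map. -/
def IsCPTP (Γ : Matrix α α ℂ →ₗ[ℂ] Matrix β β ℂ) : Prop :=
  (∀ (k : ℕ) (M : Matrix (α × Fin k) (α × Fin k) ℂ), M.PosSemidef →
    (lmapExt Γ k M).PosSemidef) ∧ (∀ M, (Γ M).trace = M.trace)

/-- Partial trace over the second tensor factor. -/
def ptrB (M : Matrix (α × β) (α × β) ℂ) : Matrix α α ℂ :=
  Matrix.of fun i j => ∑ m, M (i, m) (j, m)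

/-- Partial trace over the first tensor factor. -/
def ptrA (M : Matrix (α × β) (α × β) ℂ) : Matrix β β ℂ :=
  Matrix.of fun i j => ∑ m, M (m, i) (m, j)

/-- Choi operator J(Λ) = Σ_{i,j} |i⟩⟨j| ⊗ Λ(|i⟩⟨j|). -/
def choi (Λ : Matrix α α ℂ →ₗ[ℂ] Matrix β β ℂ) : Matrix (α × β) (α × β) ℂ :=
  Matrix.of fun p q => Λ (Matrix.single p.1 q.1 1) p.2 q.2

/-- Entanglement-breaking channel: all extended outputs are separable. -/
def IsEB (Λ : Matrix α α ℂ →ₗ[ℂ] Matrix β β ℂ) : Prop :=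
  IsCPTP Λ ∧ ∀ (k : ℕ) (ρ : Matrix (α × Fin k) (α × Fin k) ℂ), IsDensity ρ →
    lmapExt Λ k ρ ∈ SepSet β (Fin k)

end


noncomputable section EBAux
set_option linter.unusedSectionVars false
set_option maxHeartbeats 1000000

namespace EBAux

open Matrix
open scoped Kronecker ComplexOrder

variable {n : Type*} [Fintype n] [DecidableEq n]

lemma vecState_eq_mul {α : Type*} (v : α → ℂ) :
    vecState v = Matrix.replicateCol Unit v * Matrix.replicateRow Unit (star v) := by
  ext i j
  simp [vecState, Matrix.mul_apply, Matrix.replicateCol, Matrix.replicateRow]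

lemma vecState_posSemidef {α : Type*} [Fintype α] (v : α → ℂ) : (vecState v).PosSemidef := by
  rw [vecState_eq_mul]
  have : Matrix.replicateRow Unit (star v) = (Matrix.replicateCol Unit v)ᴴ := by
    ext i j; simp [Matrix.replicateRow, Matrix.replicateCol]
  rw [this]
  exact Matrix.posSemidef_self_mul_conjTranspose _

lemma vecState_rank_le_one {α : Type*} [Fintype α] (v : α → ℂ) : (vecState v).rank ≤ 1 := by
  rw [vecState_eq_mul]
  calc (Matrix.replicateCol Unit v * Matrix.replicateRow Unit (star v)).rank
      ≤ (Matrix.replicateCol Unit v).rank := Matrix.rank_mul_le_left _ _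
    _ ≤ Fintype.card Unit := Matrix.rank_le_card_width _
    _ = 1 := Fintype.card_unit

lemma vecState_trace {α : Type*} [Fintype α] (v : α → ℂ) :
    (vecState v).trace = ((∑ i, Complex.normSq (v i) : ℝ) : ℂ) := by
  simp [Matrix.trace, vecState, Matrix.diag, Complex.mul_conj]

lemma vecState_smul {α : Type*} (c : ℝ) (v : α → ℂ) :
    vecState (c • v) = (c ^ 2 : ℝ) • vecState v := by
  ext i j
  simp only [vecState, Matrix.of_apply, Pi.smul_apply, Matrix.smul_apply, Complex.real_smul,
    _root_.map_mul, Complex.ofReal_pow]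
  push_cast
  simp only [Complex.conj_ofReal, _root_.map_mul]
  ring

lemma vecState_star {α : Type*} (v : α → ℂ) : vecState (star v) = (vecState v)ᵀ := by
  ext i j
  simp [vecState, Matrix.transpose_apply, mul_comm]

lemma kron_pure_hermitian {α β : Type*} (v : α → ℂ) (u : β → ℂ) :
    (vecState v ⊗ₖ vecState u).IsHermitian := by
  ext p q
  simp only [Matrix.conjTranspose_apply, Matrix.kroneckerMap_apply, vecState, Matrix.of_apply,
    star_mul']
  simp only [Complex.star_def, Complex.conj_conj, _root_.map_mul]
  ring

/-- Submodule of Hermitian matrices over ℝ. -/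
def hermSub (n : Type*) [Fintype n] : Submodule ℝ (Matrix n n ℂ) where
  carrier := {M | M.IsHermitian}
  add_mem' := fun h1 h2 => h1.add h2
  zero_mem' := Matrix.isHermitian_zero
  smul_mem' := by
    intro c M hM
    have : (c • M)ᴴ = c • Mᴴ := by
      ext i j; simp [Matrix.conjTranspose_apply, Complex.real_smul]
    show (c • M)ᴴ = c • M
    rw [this, hM]

/-- Real-linear "coordinates" map injective on Hermitian matrices. -/
def hermCoords [LinearOrder n] : Matrix n n ℂ →ₗ[ℝ] (n × n → ℝ) where
  toFun M := fun p => if p.1 ≤ p.2 then (M p.1 p.2).re else (M p.2 p.1).im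
  map_add' M N := by ext p; by_cases h : p.1 ≤ p.2 <;> simp [h]
  map_smul' c M := by
    ext p; by_cases h : p.1 ≤ p.2 <;> simp [h, Complex.real_smul]

lemma hermCoords_inj [LinearOrder n] {M : Matrix n n ℂ} (hM : M.IsHermitian)
    (h : hermCoords M = 0) : M = 0 := by
  have him : ∀ i j : n, (M i j).im = - (M j i).im := by
    intro i j
    have := congrArg Complex.im (Matrix.IsHermitian.apply hM j i)
    simp only [Complex.star_def, Complex.conj_im] at this
    linarith
  have hre : ∀ i j : n, (M i j).re = (M j i).re := by
    intro i j
    have := congrArg Complex.re (Matrix.IsHermitian.apply hM j i)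
    simpa [Complex.star_def] using this
  ext i j
  have h1 := congrFun h (i, j)
  have h2 := congrFun h (j, i)
  simp only [hermCoords, LinearMap.coe_mk, AddHom.coe_mk, Pi.zero_apply] at h1 h2
  rcases le_total i j with hij | hij
  · simp only [hij, if_pos] at h1
    by_cases hji : j ≤ i
    · have hii : i = j := le_antisymm hij hji
      subst hii
      have : (M i i).im = 0 := by have := him i i; linarith
      simp [Complex.ext_iff, h1, this]
    · simp only [hji, if_neg, not_false_iff] at h2
      simp [Complex.ext_iff, h1, h2]
  · by_cases hji : j ≤ i
    · by_cases hij' : i ≤ j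
      · have hii : i = j := le_antisymm hij' hji
        subst hii
        simp only [le_refl, if_pos] at h1
        have : (M i i).im = 0 := by have := him i i; linarith
        simp [Complex.ext_iff, h1, this]
      · simp only [hij', if_neg, not_false_iff] at h1
        simp only [hji, if_pos] at h2
        have e1 : (M i j).re = 0 := by rw [hre i j]; exact h2
        have e2 : (M i j).im = 0 := by rw [him i j, h1]; ring
        show M i j = 0
        simp [Complex.ext_iff, e1, e2]
    · exact absurd hij hji

lemma card_le_of_herm_trace_one {n ι : Type*} [Fintype n] [DecidableEq n] [Fintype ι]
    (z : ι → Matrix n n ℂ) (hz : AffineIndependent ℝ z)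
    (hherm : ∀ i, (z i).IsHermitian) (htr : ∀ i, (z i).trace = 1) :
    Fintype.card ι ≤ (Fintype.card n) ^ 2 := by
  classical
  rcases isEmpty_or_nonempty ι with hι | hι
  · simp [Fintype.card_eq_zero]
  obtain ⟨i0⟩ := hι
  have hn : Nonempty n := by
    by_contra h
    have : IsEmpty n := not_nonempty_iff.mp h
    have := htr i0
    rw [Matrix.trace] at this
    simp at this
  obtain ⟨n0⟩ := hn
  letI : LinearOrder n := LinearOrder.lift' (Fintype.equivFin n) (Fintype.equivFin n).injective
  rw [affineIndependent_iff_linearIndependent_vsub ℝ z i0] at hz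
  set w : {x // x ≠ i0} → Matrix n n ℂ := fun i => z i -ᵥ z i0 with hw
  have hwherm : ∀ i, (w i).IsHermitian := fun i => (hherm i).sub (hherm i0)
  have hdisj : Disjoint (Submodule.span ℝ (Set.range w)) (LinearMap.ker (hermCoords (n := n))) := by
    rw [Submodule.disjoint_def]
    intro x hx1 hx2
    have hxh : x ∈ hermSub n := by
      refine Submodule.span_le.mpr ?_ hx1
      rintro _ ⟨i, rfl⟩
      exact hwherm i
    exact hermCoords_inj hxh (LinearMap.mem_ker.mp hx2)
  have hLI : LinearIndependent ℝ (fun i => hermCoords (w i)) := by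
    have := hz.map (f := hermCoords (n := n)) hdisj
    exact this
  let g : ((n × n) → ℝ) →ₗ[ℝ] ℝ :=
    { toFun := fun x => ∑ i, x (i, i)
      map_add' := fun x y => by simp [Finset.sum_add_distrib]
      map_smul' := fun c x => by simp [Finset.mul_sum] }
  have hmemK : ∀ i, hermCoords (w i) ∈ LinearMap.ker g := by
    intro i
    have htr0 : (w i).trace = 0 := by
      show (z i - z i0).trace = 0
      rw [Matrix.trace_sub, htr i, htr i0, sub_self]
    simp only [LinearMap.mem_ker]
    show (∑ j, hermCoords (w i) (j, j)) = 0
    have : ∀ j : n, hermCoords (w i) (j, j) = ((w i) j j).re := by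
      intro j; simp [hermCoords]
    rw [Finset.sum_congr rfl (fun j _ => this j), ← Complex.re_sum]
    rw [show (∑ j, (w i) j j) = (w i).trace from rfl, htr0]
    simp
  let F : {x // x ≠ i0} → LinearMap.ker g := fun i => ⟨hermCoords (w i), hmemK i⟩
  have hLIF : LinearIndependent ℝ F := by
    apply LinearIndependent.of_comp (LinearMap.ker g).subtype
    exact hLI
  have hcard1 : Fintype.card {x // x ≠ i0} ≤ Module.finrank ℝ (LinearMap.ker g) :=
    hLIF.fintype_card_le_finrank
  have hgsurj : Function.Surjective g := by
    intro r
    set x0 : (n × n) → ℝ := Pi.single ((n0, n0) : n × n) (1:ℝ) with hx0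
    refine ⟨r • x0, ?_⟩
    have : g x0 = 1 := by
      show (∑ i : n, x0 (i, i)) = 1
      rw [hx0]
      rw [Finset.sum_eq_single n0]
      · simp
      · intro j _ hj
        apply Pi.single_eq_of_ne
        simp [Prod.ext_iff, hj]
      · simp
    rw [_root_.map_smul, this, smul_eq_mul, mul_one]
  have hrange : LinearMap.range g = ⊤ := LinearMap.range_eq_top.mpr hgsurj
  have hrk := LinearMap.finrank_range_add_finrank_ker g
  rw [hrange] at hrk
  have h1 : Module.finrank ℝ (⊤ : Submodule ℝ ℝ) = 1 := by simp
  have h2 : Module.finrank ℝ ((n × n) → ℝ) = Fintype.card n * Fintype.card n := by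
    rw [Module.finrank_pi]
    simp [Fintype.card_prod]
  rw [h1, h2] at hrk
  have hcard2 : Fintype.card {x // x ≠ i0} = Fintype.card ι - 1 := by
    simp [Fintype.card_subtype_compl]
  have hpos : 1 ≤ Fintype.card ι := Fintype.card_pos_iff.mpr ⟨i0⟩
  have : Fintype.card n ^ 2 = Fintype.card n * Fintype.card n := sq (Fintype.card n)
  omega

end EBAux
end EBAux

theorem eb_measure_and_prepare {e b : ℕ} (he : 0 < e)
    (Λ : Matrix (Fin e) (Fin e) ℂ →ₗ[ℂ] Matrix (Fin b) (Fin b) ℂ)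
    (hcptp : IsCPTP Λ) (hchoi : (e : ℝ)⁻¹ • choi Λ ∈ SepSet (Fin e) (Fin b)) :
    ∃ s : ℕ, s ≤ (b * e) ^ 2 ∧
      ∃ (ψ : Fin s → Matrix (Fin b) (Fin b) ℂ) (η : Fin s → Matrix (Fin e) (Fin e) ℂ),
        (∀ i, IsPure (ψ i)) ∧ (∀ i, (η i).PosSemidef) ∧ (∀ i, (η i).rank ≤ 1) ∧
          (∑ i, η i = 1) ∧ ∀ ρ, Λ ρ = ∑ i, ((η i * ρ).trace) • ψ i := by
  classical
  obtain ⟨ι, hfι, z, w, hrangez, haff, hwpos, hwsum, hrepr⟩ :=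
    eq_pos_convex_span_of_mem_convexHull hchoi
  have hze : ∀ i : ι, ∃ φ ψ, IsPure φ ∧ IsPure ψ ∧ z i = φ ⊗ₖ ψ := by
    intro i
    exact hrangez ⟨i, rfl⟩
  choose φf ψf hφ hψ hzeq using hze
  choose vφ hvφ hφv using hφ
  choose vψ hvψ hψv using hψ
  have he' : (e : ℝ) ≠ 0 := Nat.cast_ne_zero.mpr he.ne'
  -- recover the Choi matrix
  have hchoi_eq : choi Λ = ∑ i, (e * w i : ℝ) • z i := by
    have h1 : (e : ℝ) • ((e : ℝ)⁻¹ • choi Λ) = choi Λ := by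
      rw [smul_smul, mul_inv_cancel₀ he', one_smul]
    rw [← h1, ← hrepr, Finset.smul_sum]
    congr 1
    ext i
    rw [smul_smul]
  set c : ι → ℝ := fun i => e * w i with hc
  have hcpos : ∀ i, 0 < c i := fun i =>
    mul_pos (by exact_mod_cast he) (hwpos i)
  -- Choi entries
  have hchoiApp : ∀ (p q : Fin e) (k l : Fin b),
      Λ (Matrix.single p q 1) k l
        = ∑ i, ((c i : ℝ) : ℂ) * (φf i p q * ψf i k l) := by
    intro p q k l
    rw [show Λ (Matrix.single p q 1) k l = choi Λ (p, k) (q, l) from rfl]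
    rw [hchoi_eq, Matrix.sum_apply]
    refine Finset.sum_congr rfl fun i _ => ?_
    rw [hzeq i]
    simp only [Matrix.smul_apply, Complex.real_smul, Matrix.kroneckerMap_apply]
    rfl
  -- traces of the pure factors
  have hφtr : ∀ i, (φf i).trace = 1 := by
    intro i
    rw [hφv i, EBAux.vecState_trace, hvφ i]
    simp
  have hψtr : ∀ i, (ψf i).trace = 1 := by
    intro i
    rw [hψv i, EBAux.vecState_trace, hvψ i]
    simp
  -- trace preservation gives the POVM identity
  have hPOVM : ∀ p q : Fin e,
      (∑ i, ((c i : ℝ) : ℂ) * φf i p q) = (1 : Matrix (Fin e) (Fin e) ℂ) p q := by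
    intro p q
    have htr1 : (Λ (Matrix.single p q 1)).trace
        = (Matrix.single p q (1:ℂ)).trace := hcptp.2 _
    have htr2 : (Matrix.single p q (1:ℂ)).trace = if p = q then 1 else 0 := by
      by_cases hpq : p = q
      · subst hpq
        simp [Matrix.trace, Matrix.diag, Matrix.single]
      · show (∑ x, Matrix.single p q (1:ℂ) x x) = _
        rw [if_neg hpq]
        refine Finset.sum_eq_zero fun x _ => ?_
        show (if p = x ∧ q = x then (1:ℂ) else 0) = 0
        rw [if_neg]
        rintro ⟨rfl, rfl⟩
        exact hpq rfl
    have htr3 : (Λ (Matrix.single p q 1)).trace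
        = ∑ i, ((c i : ℝ) : ℂ) * φf i p q := by
      rw [Matrix.trace]
      unfold Matrix.diag
      calc (∑ k, Λ (Matrix.single p q 1) k k)
          = ∑ k, ∑ i, ((c i : ℝ) : ℂ) * (φf i p q * ψf i k k) := by
            refine Finset.sum_congr rfl fun k _ => hchoiApp p q k k
        _ = ∑ i, ∑ k, ((c i : ℝ) : ℂ) * (φf i p q * ψf i k k) := Finset.sum_comm
        _ = ∑ i, ((c i : ℝ) : ℂ) * φf i p q := by
            refine Finset.sum_congr rfl fun i _ => ?_
            rw [← Finset.mul_sum, ← Finset.mul_sum]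
            have : (∑ k, ψf i k k) = (ψf i).trace := rfl
            rw [this, hψtr i, mul_one]
    rw [← htr3, htr1, htr2, Matrix.one_apply]
  -- cardinality bound
  have hcard : Fintype.card ι ≤ (b * e) ^ 2 := by
    have := EBAux.card_le_of_herm_trace_one z haff
      (fun i => by rw [hzeq i, hφv i, hψv i]; exact EBAux.kron_pure_hermitian _ _)
      (fun i => by
        rw [hzeq i, Matrix.trace_kronecker, hφtr i, hψtr i, mul_one])
    calc Fintype.card ι ≤ (Fintype.card (Fin e × Fin b)) ^ 2 := this
      _ = (b * e) ^ 2 := by simp [Fintype.card_prod, Nat.mul_comm]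
  -- set up the indexing
  refine ⟨Fintype.card ι, hcard, ?_⟩
  set π : Fin (Fintype.card ι) ≃ ι := (Fintype.equivFin ι).symm with hπ
  -- measurement operators
  set η0 : ι → Matrix (Fin e) (Fin e) ℂ :=
    fun i => vecState (Real.sqrt (c i) • star (vφ i)) with hη0
  have hη0eq : ∀ i, η0 i = (c i : ℝ) • (φf i)ᵀ := by
    intro i
    rw [hη0]
    show vecState (Real.sqrt (c i) • star (vφ i)) = (c i : ℝ) • (φf i)ᵀ
    rw [EBAux.vecState_smul, EBAux.vecState_star, Real.sq_sqrt (hcpos i).le, hφv i]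
  refine ⟨fun j => ψf (π j), fun j => η0 (π j), fun j => ⟨vψ (π j), hvψ _, hψv _⟩,
    fun j => EBAux.vecState_posSemidef _, fun j => EBAux.vecState_rank_le_one _, ?_, ?_⟩
  · -- POVM sums to identity
    rw [Equiv.sum_comp π η0]
    ext p q
    rw [Matrix.sum_apply]
    have : ∀ i, η0 i p q = ((c i : ℝ) : ℂ) * φf i q p := by
      intro i
      rw [hη0eq i]
      simp [Matrix.smul_apply, Matrix.transpose_apply, Complex.real_smul]
    rw [Finset.sum_congr rfl fun i _ => this i, hPOVM q p, Matrix.one_apply, Matrix.one_apply]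
    simp [eq_comm]
  · -- the channel representation
    intro ρ
    rw [Equiv.sum_comp π (fun i => ((η0 i * ρ).trace) • ψf i)]
    -- expand Λ ρ via the standard basis
    have hρ : ρ = ∑ p : Fin e, ∑ q : Fin e, ρ p q • Matrix.single p q (1:ℂ) := by
      conv_lhs => rw [Matrix.matrix_eq_sum_single ρ]
      refine Finset.sum_congr rfl fun p _ => Finset.sum_congr rfl fun q _ => ?_
      rw [Matrix.smul_single, smul_eq_mul, mul_one]
    have htrη : ∀ i, (η0 i * ρ).trace = ((c i : ℝ) : ℂ) * ∑ p, ∑ q, ρ p q * φf i p q := by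
      intro i
      rw [Matrix.trace]
      unfold Matrix.diag
      calc (∑ a, (η0 i * ρ) a a)
          = ∑ a, ∑ p, η0 i a p * ρ p a := by
            refine Finset.sum_congr rfl fun a _ => ?_
            rw [Matrix.mul_apply]
        _ = ∑ a, ∑ p, ((c i : ℝ) : ℂ) * (ρ p a * φf i p a) := by
            refine Finset.sum_congr rfl fun a _ => Finset.sum_congr rfl fun p _ => ?_
            rw [hη0eq i]
            simp only [Matrix.smul_apply, Matrix.transpose_apply, Complex.real_smul,
              smul_eq_mul]
            ring
        _ = ((c i : ℝ) : ℂ) * ∑ p, ∑ a, ρ p a * φf i p a := by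
            rw [Finset.mul_sum]
            rw [Finset.sum_comm]
            refine Finset.sum_congr rfl fun p _ => ?_
            rw [Finset.mul_sum]
    ext k l
    calc Λ ρ k l = ∑ p, ∑ q, ρ p q * Λ (Matrix.single p q 1) k l := by
          conv_lhs => rw [hρ]
          rw [map_sum]
          rw [Matrix.sum_apply]
          refine Finset.sum_congr rfl fun p _ => ?_
          rw [map_sum, Matrix.sum_apply]
          refine Finset.sum_congr rfl fun q _ => ?_
          rw [Λ.map_smul]
          simp [Matrix.smul_apply]
      _ = ∑ p, ∑ q, ∑ i, ρ p q * (((c i : ℝ) : ℂ) * (φf i p q * ψf i k l)) := by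
          refine Finset.sum_congr rfl fun p _ => Finset.sum_congr rfl fun q _ => ?_
          rw [hchoiApp p q k l, Finset.mul_sum]
      _ = ∑ i, ∑ p, ∑ q, ρ p q * (((c i : ℝ) : ℂ) * (φf i p q * ψf i k l)) := by
          have hswap : ∀ p : Fin e,
              ∑ q : Fin e, ∑ i : ι, ρ p q * (((c i : ℝ) : ℂ) * (φf i p q * ψf i k l))
                = ∑ i : ι, ∑ q : Fin e, ρ p q * (((c i : ℝ) : ℂ) * (φf i p q * ψf i k l)) :=
            fun p => Finset.sum_comm
          rw [Finset.sum_congr rfl fun p _ => hswap p]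
          exact Finset.sum_comm
      _ = ∑ i, (((c i : ℝ) : ℂ) * ∑ p, ∑ q, ρ p q * φf i p q) * ψf i k l := by
          refine Finset.sum_congr rfl fun i _ => ?_
          simp only [Finset.mul_sum, Finset.sum_mul]
          refine Finset.sum_congr rfl fun p _ => Finset.sum_congr rfl fun q _ => ?_
          ring
      _ = (∑ i, ((η0 i * ρ).trace) • ψf i) k l := by
          rw [Matrix.sum_apply]
          refine Finset.sum_congr rfl fun i _ => ?_
          rw [htrη i]
          simp [Matrix.smul_apply]
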